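/- For every graph H and every positive integer n, IR(H, K_{1,n}) ≤ |E(H)|·(n−1) + |V(H)|, where |E(H)| and |V(H)| are the numbers of edges and vertices of H. -/

import Mathlib

open SimpleGraph

def ArrowsInd {V α β : Type*} (F : SimpleGraph V) (H : SimpleGraph α) (G : SimpleGraph β) : Prop :=
  ∀ c : Sym2 V → Bool,
    (∃ f : H ↪g F, ∀ u v, H.Adj u v → c s(f u, f v) = true) ∨
    (∃ g : G ↪g F, ∀ u v, G.Adj u v → c s(g u, g v) = false)

noncomputable def IR {α β : Type*} (H : SimpleGraph α) (G : SimpleGraph β) : ℕ :=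
  sInf {N : ℕ | ∃ F : SimpleGraph (Fin N), ArrowsInd F H G}

def StarGraph (n : ℕ) : SimpleGraph (Fin 1 ⊕ Fin n) := completeBipartiteGraph (Fin 1) (Fin n)

section Aux

open Finset

open scoped Classical in
/-- The back-degree of `v`: number of neighbors of `v` that are smaller than `v`. -/
noncomputable def bdeg {k : ℕ} (H : SimpleGraph (Fin k)) (v : Fin k) : ℕ :=
  (Finset.univ.filter fun u => u < v ∧ H.Adj u v).card

/-- Cluster sizes for the blow-up construction. -/
noncomputable def clSize (n k : ℕ) (H : SimpleGraph (Fin k)) (v : Fin k) : ℕ :=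
  1 + (n - 1) * bdeg H v

/-- The blow-up of `H` with cluster sizes `clSize`. -/
def Fblow (n k : ℕ) (H : SimpleGraph (Fin k)) :
    SimpleGraph (Σ v : Fin k, Fin (clSize n k H v)) :=
  H.comap Sigma.fst

lemma clSize_pos (n k : ℕ) (H : SimpleGraph (Fin k)) (v : Fin k) : 0 < clSize n k H v := by
  simp [clSize]

lemma arrows_blow (n k : ℕ) (hn : 0 < n) (H : SimpleGraph (Fin k)) :
    ArrowsInd (Fblow n k H) H (StarGraph n) := by
  classical
  intro c
  rw [or_iff_not_imp_right]
  intro hb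
  -- Step 1: every vertex has at most n-1 blue neighbors inside any adjacent cluster
  have key : ∀ (x : Σ v : Fin k, Fin (clSize n k H v)) (v : Fin k), H.Adj x.1 v →
      ((Finset.univ.filter
        fun i : Fin (clSize n k H v) => c s(x, ⟨v, i⟩) = false).card ≤ n - 1) := by
    intro x v hadj
    by_contra hcard
    push_neg at hcard
    have hn' : n ≤ (Finset.univ.filter
        fun i : Fin (clSize n k H v) => c s(x, ⟨v, i⟩) = false).card := by omega
    obtain ⟨t, hts, htc⟩ := Finset.exists_subset_card_eq hn'
    let e := t.orderIsoOfFin htc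
    have hxv : x.1 ≠ v := H.ne_of_adj hadj
    refine hb ⟨⟨⟨Sum.elim (fun _ => x) (fun i => ⟨v, (e i).1⟩), ?_⟩, ?_⟩, ?_⟩
    · rintro (a | a) (b | b) hab
      · simp [Subsingleton.elim a b]
      · exact absurd (congrArg Sigma.fst hab) hxv
      · exact absurd (congrArg Sigma.fst hab).symm hxv
      · simp only [Sum.elim_inr] at hab
        have h1 : ((e a : Fin (clSize n k H v))) = (e b : Fin (clSize n k H v)) :=
          eq_of_heq (Sigma.mk.inj_iff.mp hab).2
        exact congrArg Sum.inr (e.injective (Subtype.ext h1))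
    · rintro (a | a) (b | b) <;>
        simp only [Fblow, comap_adj] <;>
        change H.Adj (Sum.elim (fun _ => x) (fun i => (⟨v, (e i).1⟩ : Σ v : Fin k, Fin (clSize n k H v))) _).1 (Sum.elim (fun _ => x) (fun i => (⟨v, (e i).1⟩ : Σ v : Fin k, Fin (clSize n k H v))) _).1 ↔ _ <;>
        simp [Fblow, StarGraph, hadj, hadj.symm, H.irrefl]
    · rintro (a | a) (b | b) hab
      · simp [StarGraph] at hab
      · have hmem := hts (e b).2
        simp only [Finset.mem_filter] at hmem
        exact hmem.2
      · have hmem := hts (e a).2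
        simp only [Finset.mem_filter] at hmem
        rw [Sym2.eq_swap]
        exact hmem.2
      · simp [StarGraph] at hab
  -- Step 2: greedy construction of a red transversal
  have grow : ∀ j : ℕ, ∃ ρ : ∀ v : Fin k, Fin (clSize n k H v),
      ∀ u v : Fin k, u < v → (v : ℕ) < j → H.Adj u v →
        c s(⟨u, ρ u⟩, ⟨v, ρ v⟩) = true := by
    intro j
    induction j with
    | zero => exact ⟨fun v => ⟨0, clSize_pos n k H v⟩, fun u v _ h _ => by omega⟩
    | succ j ih =>
      obtain ⟨ρ, hρ⟩ := ih
      by_cases hj : j < k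
      · set vj : Fin k := ⟨j, hj⟩ with hvjdef
        have hex : ∃ i : Fin (clSize n k H vj), ∀ u : Fin k, u < vj → H.Adj u vj →
            c s(⟨u, ρ u⟩, ⟨vj, i⟩) = true := by
          by_contra hno
          push_neg at hno
          have hsub : (Finset.univ : Finset (Fin (clSize n k H vj))) ⊆
              (Finset.univ.filter fun u => u < vj ∧ H.Adj u vj).biUnion
                (fun u => Finset.univ.filter
                  fun i : Fin (clSize n k H vj) => c s(⟨u, ρ u⟩, ⟨vj, i⟩) = false) := by
            intro i _
            obtain ⟨u, hu1, hu2, hu3⟩ := hno i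
            simp only [Finset.mem_biUnion, Finset.mem_filter, Finset.mem_univ, true_and]
            exact ⟨u, ⟨hu1, hu2⟩, by simpa using hu3⟩
          have h1 : (Finset.univ : Finset (Fin (clSize n k H vj))).card ≤
              (n - 1) * bdeg H vj := by
            calc (Finset.univ : Finset (Fin (clSize n k H vj))).card
                ≤ _ := Finset.card_le_card hsub
              _ ≤ ∑ u ∈ (Finset.univ.filter fun u => u < vj ∧ H.Adj u vj),
                    (Finset.univ.filter
                      fun i : Fin (clSize n k H vj) =>
                        c s(⟨u, ρ u⟩, ⟨vj, i⟩) = false).card :=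
                  Finset.card_biUnion_le
              _ ≤ ∑ u ∈ (Finset.univ.filter fun u => u < vj ∧ H.Adj u vj), (n - 1) := by
                  refine Finset.sum_le_sum fun u hu => ?_
                  simp only [Finset.mem_filter] at hu
                  exact key ⟨u, ρ u⟩ vj hu.2.2
              _ = (n - 1) * bdeg H vj := by
                  rw [Finset.sum_const, smul_eq_mul, mul_comm]; rfl
          have h2 : (Finset.univ : Finset (Fin (clSize n k H vj))).card =
              1 + (n - 1) * bdeg H vj := by rw [Finset.card_univ, Fintype.card_fin]; rfl
          omega
        obtain ⟨i, hi⟩ := hex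
        refine ⟨Function.update ρ vj i, ?_⟩
        intro u v huv hvj hadj
        have huvj : u ≠ vj := by
          intro h
          have h1 : (u : ℕ) = j := by rw [h, hvjdef]
          have h2 : (u : ℕ) < (v : ℕ) := huv
          omega
        rcases Nat.lt_or_ge (v : ℕ) j with h | h
        · have hvvj : v ≠ vj := by
            intro hh; subst hh; simp [hvjdef] at h
          rw [Function.update_of_ne huvj, Function.update_of_ne hvvj]
          exact hρ u v huv h hadj
        · have hvval : (v : ℕ) = j := by omega
          have hveq : v = vj := Fin.ext (by simpa [hvjdef] using hvval)
          subst hveq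
          rw [Function.update_of_ne huvj, Function.update_self]
          exact hi u huv hadj
      · exact ⟨ρ, fun u v huv hvj hadj => hρ u v huv (by omega) hadj⟩
  obtain ⟨ρ, hρ⟩ := grow k
  refine ⟨⟨⟨fun v => ⟨v, ρ v⟩, fun a b hab => by simpa using congrArg Sigma.fst hab⟩, ?_⟩, ?_⟩
  · intro a b
    exact Iff.rfl
  · intro u v hadj
    rcases lt_trichotomy u v with h | h | h
    · exact hρ u v h v.isLt hadj
    · exact absurd h (H.ne_of_adj hadj)
    · rw [Sym2.eq_swap]
      exact hρ v u h u.isLt hadj.symm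

lemma sum_bdeg_le (k : ℕ) (H : SimpleGraph (Fin k)) :
    ∑ v, bdeg H v ≤ Nat.card H.edgeSet := by
  classical
  rw [Nat.card_coe_set_eq, Set.ncard_eq_toFinset_card']
  have hsum : ∑ v, bdeg H v = (Finset.univ.sigma fun v : Fin k =>
      Finset.univ.filter fun u => u < v ∧ H.Adj u v).card := by
    rw [Finset.card_sigma]
    apply Finset.sum_congr rfl
    intro v _
    simp [bdeg]
  rw [hsum]
  apply Finset.card_le_card_of_injOn (fun p => s(p.2, p.1))
  · intro p hp
    simp only [Finset.coe_sigma, Set.mem_sigma_iff, Finset.coe_filter, Set.mem_setOf_eq, Finset.mem_coe, Finset.mem_univ, true_and] at hp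
    rw [Finset.mem_coe, Set.mem_toFinset, SimpleGraph.mem_edgeSet]
    exact hp.2
  · intro p hp q hq hpq
    simp only [Finset.coe_sigma, Set.mem_sigma_iff, Finset.coe_filter, Set.mem_setOf_eq,
      Finset.mem_coe, Finset.mem_univ, true_and] at hp hq
    simp only [Sym2.eq_iff] at hpq
    rcases hpq with ⟨h1, h2⟩ | ⟨h1, h2⟩
    · exact Sigma.ext h2 (heq_of_eq h1)
    · exfalso
      have hlt : q.1 < q.2 := by rw [← h1, ← h2]; exact hp.1
      exact absurd hlt (not_lt.mpr hq.1.le)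

lemma card_blow_le (n k : ℕ) (H : SimpleGraph (Fin k)) :
    Fintype.card (Σ v : Fin k, Fin (clSize n k H v)) ≤ Nat.card H.edgeSet * (n - 1) + k := by
  classical
  have h1 : Fintype.card (Σ v : Fin k, Fin (clSize n k H v)) =
      ∑ v, clSize n k H v := by simp [Fintype.card_sigma]
  rw [h1]
  have : ∑ v, clSize n k H v = k + (n - 1) * ∑ v, bdeg H v := by
    simp [clSize, Finset.sum_add_distrib, Finset.mul_sum]
  rw [this]
  calc k + (n - 1) * ∑ v, bdeg H v
      ≤ k + (n - 1) * Nat.card H.edgeSet :=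
        Nat.add_le_add_left (Nat.mul_le_mul_left _ (sum_bdeg_le k H)) k
    _ = Nat.card H.edgeSet * (n - 1) + k := by ring

end Aux

/-- IR(H, K_{1,n}) ≤ |E(H)|·(n−1) + |V(H)|. -/
theorem IR_le_edges_mul (k n : ℕ) (hn : 0 < n) (H : SimpleGraph (Fin k)) :
    IR H (StarGraph n) ≤ Nat.card H.edgeSet * (n - 1) + k := by
  classical
  set N := Nat.card H.edgeSet * (n - 1) + k with hN
  obtain ⟨e⟩ : Nonempty ((Σ v : Fin k, Fin (clSize n k H v)) ↪ Fin N) := by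
    apply Function.Embedding.nonempty_of_card_le
    rw [Fintype.card_fin]
    exact card_blow_le n k H
  set F : SimpleGraph (Fin N) := (Fblow n k H).map e with hF
  have hemb : Fblow n k H ↪g F := SimpleGraph.Embedding.map e (Fblow n k H)
  have harr : ArrowsInd F H (StarGraph n) := by
    intro c
    rcases arrows_blow n k hn H (fun s => c (s.map hemb)) with ⟨f, hf⟩ | ⟨g, hg⟩
    · left
      refine ⟨hemb.comp f, fun u v huv => ?_⟩
      have := hf u v huv
      simpa [Sym2.map_pair_eq] using this
    · right
      refine ⟨hemb.comp g, fun u v huv => ?_⟩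
      have := hg u v huv
      simpa [Sym2.map_pair_eq] using this
  exact Nat.sInf_le ⟨F, harr⟩
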